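/- For every positive integer n, (2^{n²+n}/n!) · ∏_{j=0}^{n-1} [Γ((n+3+j)/2)·Γ(1/2) / (Γ((2+j)/2)·Γ((1+j)/2)·Γ((4+j)/2))] = 2^{n²+n} · ∏_{k=1}^{n} Cat(k). -/

import Mathlib

open Real Finset

/-- The k-th Catalan number as a real number: Cat(k) = (1/(k+1))·C(2k,k). -/
noncomputable def catR (k : ℕ) : ℝ := (1 / ((k : ℝ) + 1)) * (Nat.choose (2 * k) k : ℝ)

/-- duplication formula specialized to half-integers. -/
lemma dup (m : ℕ) :
    Real.Gamma (((m : ℝ) + 1) / 2) * Real.Gamma (((m : ℝ) + 2) / 2) =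
      (m.factorial : ℝ) * ((2 : ℝ) ^ m)⁻¹ * Real.sqrt π := by
  have h := Real.Gamma_mul_Gamma_add_half (((m : ℝ) + 1) / 2)
  rw [show ((m : ℝ) + 1) / 2 + 1 / 2 = ((m : ℝ) + 2) / 2 by ring,
      show 2 * (((m : ℝ) + 1) / 2) = (m : ℝ) + 1 by ring,
      show (1 : ℝ) - ((m : ℝ) + 1) = -(m : ℝ) by ring,
      Real.rpow_neg (by norm_num), Real.rpow_natCast,
      Real.Gamma_nat_eq_factorial] at h
  linarith [h]

lemma tele (g : ℕ → ℝ) (hg : ∀ i, g i ≠ 0) :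
    ∀ n, ∏ j ∈ Finset.range n, g (j + 1) / g j = g n / g 0 := by
  intro n
  induction n with
  | zero => simp [div_self (hg 0)]
  | succ n ih =>
      rw [Finset.prod_range_succ, ih, div_mul_div_comm, mul_comm (g n) (g (n + 1))]
      exact mul_div_mul_right _ _ (hg n)

lemma scalar (n : ℕ) :
    (n.factorial : ℝ) / ((n + 1).factorial : ℝ) *
      (Real.Gamma ((2 * (n : ℝ) + 3) / 2) / Real.Gamma (((n : ℝ) + 3) / 2)) *
      (Real.Gamma ((2 * (n : ℝ) + 4) / 2) * Real.sqrt π /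
        (Real.Gamma (((n : ℝ) + 2) / 2) * Real.Gamma (((n : ℝ) + 1) / 2) *
          Real.Gamma (((n : ℝ) + 4) / 2))) = catR (n + 1) := by
  have h1 := dup n
  have h2 := dup (n + 2)
  have h3 := dup (2 * n + 2)
  push_cast at h2 h3
  rw [show ((n : ℝ) + 2 + 1) / 2 = ((n : ℝ) + 3) / 2 by ring,
      show ((n : ℝ) + 2 + 2) / 2 = ((n : ℝ) + 4) / 2 by ring] at h2
  rw [show (2 * (n : ℝ) + 2 + 1) / 2 = (2 * (n : ℝ) + 3) / 2 by ring,
      show (2 * (n : ℝ) + 2 + 2) / 2 = (2 * (n : ℝ) + 4) / 2 by ring] at h3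
  set A := Real.Gamma (((n : ℝ) + 1) / 2) with hA
  set B := Real.Gamma (((n : ℝ) + 2) / 2) with hB
  set C := Real.Gamma (((n : ℝ) + 3) / 2) with hC
  set D := Real.Gamma (((n : ℝ) + 4) / 2) with hD
  set E := Real.Gamma ((2 * (n : ℝ) + 3) / 2) with hE
  set F := Real.Gamma ((2 * (n : ℝ) + 4) / 2) with hF
  have hApos : (0:ℝ) < A := Real.Gamma_pos_of_pos (by positivity)
  have hCpos : (0:ℝ) < C := Real.Gamma_pos_of_pos (by positivity)
  have hEpos : (0:ℝ) < E := Real.Gamma_pos_of_pos (by positivity)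
  have hBe : B = ((n.factorial : ℝ) * ((2 : ℝ) ^ n)⁻¹ * Real.sqrt π) / A :=
    (eq_div_iff hApos.ne').mpr (by linear_combination h1)
  have hDe : D = (((n + 2).factorial : ℝ) * ((2 : ℝ) ^ (n + 2))⁻¹ * Real.sqrt π) / C :=
    (eq_div_iff hCpos.ne').mpr (by linear_combination h2)
  have hFe : F = (((2 * n + 2).factorial : ℝ) * ((2 : ℝ) ^ (2 * n + 2))⁻¹ * Real.sqrt π) / E :=
    (eq_div_iff hEpos.ne').mpr (by linear_combination h3)
  rw [hBe, hDe, hFe]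
  have hcat : catR (n + 1) =
      (1 / ((n : ℝ) + 2)) * (((2 * n + 2).factorial : ℝ) /
        (((n + 1).factorial : ℝ) * ((n + 1).factorial : ℝ))) := by
    unfold catR
    rw [show 2 * (n + 1) = 2 * n + 2 by ring]
    rw [Nat.cast_choose ℝ (by omega : n + 1 ≤ 2 * n + 2)]
    rw [show 2 * n + 2 - (n + 1) = n + 1 by omega]
    push_cast
    ring
  rw [hcat]
  have hsp : Real.sqrt π ≠ 0 := by positivity
  have hfn : (n.factorial : ℝ) ≠ 0 := by positivity
  have hfn1 : ((n + 1).factorial : ℝ) ≠ 0 := by positivity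
  have h2n : (2 : ℝ) ^ n ≠ 0 := by positivity
  rw [show n + 2 = (n + 1) + 1 by ring, Nat.factorial_succ (n + 1), Nat.factorial_succ n]
  push_cast
  field_simp
  ring

lemma key (n : ℕ) :
    (1 / (n.factorial : ℝ)) * ∏ j ∈ Finset.range n,
        Real.Gamma (((n : ℝ) + 3 + j) / 2) * Real.Gamma (1 / 2) /
          (Real.Gamma ((2 + (j : ℝ)) / 2) * Real.Gamma ((1 + (j : ℝ)) / 2) *
            Real.Gamma ((4 + (j : ℝ)) / 2)) =
      ∏ k ∈ Finset.Icc 1 n, catR k := by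
  induction n with
  | zero => simp
  | succ n ih =>
      push_cast
      rw [Finset.prod_range_succ, Finset.prod_Icc_succ_top (by omega : 1 ≤ n + 1)]
      set G : ℕ → ℝ := fun j => Real.Gamma (((n : ℝ) + 3 + j) / 2) with hG
      have hGne : ∀ i, G i ≠ 0 := fun i =>
        (Real.Gamma_pos_of_pos (by positivity)).ne'
      have h1 : ∀ j ∈ Finset.range n,
          Real.Gamma (((n : ℝ) + 1 + 3 + (j : ℝ)) / 2) * Real.Gamma (1 / 2) /
            (Real.Gamma ((2 + (j : ℝ)) / 2) * Real.Gamma ((1 + (j : ℝ)) / 2) *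
              Real.Gamma ((4 + (j : ℝ)) / 2)) =
          (Real.Gamma (((n : ℝ) + 3 + (j : ℝ)) / 2) * Real.Gamma (1 / 2) /
            (Real.Gamma ((2 + (j : ℝ)) / 2) * Real.Gamma ((1 + (j : ℝ)) / 2) *
              Real.Gamma ((4 + (j : ℝ)) / 2))) * (G (j + 1) / G j) := by
        intro j _
        have hj : G (j + 1) = Real.Gamma (((n : ℝ) + 1 + 3 + (j : ℝ)) / 2) := by
          simp only [hG]
          push_cast
          ring_nf
        rw [hj]
        have := hGne j
        simp only [hG] at this ⊢
        field_simp
      rw [Finset.prod_congr rfl h1, Finset.prod_mul_distrib, tele G hGne n]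
      have ihm : (∏ j ∈ Finset.range n,
          Real.Gamma (((n : ℝ) + 3 + (j : ℝ)) / 2) * Real.Gamma (1 / 2) /
            (Real.Gamma ((2 + (j : ℝ)) / 2) * Real.Gamma ((1 + (j : ℝ)) / 2) *
              Real.Gamma ((4 + (j : ℝ)) / 2))) =
          (n.factorial : ℝ) * ∏ k ∈ Finset.Icc 1 n, catR k := by
        rw [← ih]
        have : (n.factorial : ℝ) ≠ 0 := by positivity
        field_simp
        exact Finset.prod_congr rfl (fun x _ => by ring)
      rw [ihm]
      have hGn : G n = Real.Gamma ((2 * (n : ℝ) + 3) / 2) := by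
        simp only [hG]; ring_nf
      have hG0 : G 0 = Real.Gamma (((n : ℝ) + 3) / 2) := by
        simp only [hG]; push_cast; ring_nf
      rw [hGn, hG0, Real.Gamma_one_half_eq,
        show ((n : ℝ) + 1 + 3 + (n : ℝ)) / 2 = (2 * (n : ℝ) + 4) / 2 by ring,
        show ((2 : ℝ) + (n : ℝ)) / 2 = ((n : ℝ) + 2) / 2 by ring,
        show ((1 : ℝ) + (n : ℝ)) / 2 = ((n : ℝ) + 1) / 2 by ring,
        show ((4 : ℝ) + (n : ℝ)) / 2 = ((n : ℝ) + 4) / 2 by ring]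
      linear_combination (∏ k ∈ Finset.Icc 1 n, catR k) * scalar n

/-- (2^{n²+n}/n!)·∏_{j=0}^{n-1} Γ((n+3+j)/2)Γ(1/2)/(Γ((2+j)/2)Γ((1+j)/2)Γ((4+j)/2))
= 2^{n²+n}·∏_{k=1}^n Cat(k). -/
theorem stmt4 (n : ℕ) (hn : 0 < n) :
    ((2 : ℝ) ^ (n ^ 2 + n) / (n.factorial : ℝ)) *
      ∏ j ∈ Finset.range n,
        Real.Gamma (((n : ℝ) + 3 + j) / 2) * Real.Gamma (1 / 2) /
          (Real.Gamma ((2 + (j : ℝ)) / 2) * Real.Gamma ((1 + (j : ℝ)) / 2) *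
            Real.Gamma ((4 + (j : ℝ)) / 2)) =
      (2 : ℝ) ^ (n ^ 2 + n) * ∏ k ∈ Finset.Icc 1 n, catR k := by
  rw [← key n]
  ring
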